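/- Let R ⊇ ℚ be a field and Y, Z ∈ H⟦ℏ⟧[[Q]] such that Y(x=α_i,ℏ,Q) ∈ R_α(ℏ)[[Q]] for every i ∈ {1,…,n}, Z is recursive, and the pair (Y,Z) satisfies the MPC. Then Z̄ := (x + ℏ Q d/dQ) Z is recursive and the pair (Y, Z̄) satisfies the MPC. -/

import Mathlib

open Finset

noncomputable section

namespace Stmt1

variable (n : ℕ) (R : Type) [Field R] [Algebra ℚ R]

/-- The multiplicative set of (images in `R[α_1,…,α_n]` of) nonzero elements of
`ℚ[α_1,…,α_n]`. -/
def qSet : Submonoid (MvPolynomial (Fin n) R) :=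
  Submonoid.map (MvPolynomial.map (algebraMap ℚ R) : MvPolynomial (Fin n) ℚ →+* _).toMonoidHom
    (nonZeroDivisors (MvPolynomial (Fin n) ℚ))

/-- `R_α`: the localization of `R[α_1,…,α_n]` at the nonzero elements of `ℚ[α_1,…,α_n]`. -/
abbrev Ra := Localization (qSet n R)

/-- `H = R[α_1,…,α_n, x]/((x-α_1)⋯(x-α_n))`, realized as a quotient of the polynomial
ring on the variables `α_i` (`some i`) and `x` (`none`). -/
abbrev Hring := MvPolynomial (Option (Fin n)) R ⧸
  Ideal.span ({∏ i : Fin n,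
      (MvPolynomial.X (none : Option (Fin n)) - MvPolynomial.X (some i))} :
    Set (MvPolynomial (Option (Fin n)) R))

/-- The canonical map `R[α] → R_α`. -/
def toRa : MvPolynomial (Fin n) R →+* Ra n R := algebraMap _ _

/-- The indeterminates `α_i` as elements of `R_α`. -/
def aR (i : Fin n) : Ra n R := toRa n R (MvPolynomial.X i)

/-- The canonical map `ℚ → R_α`. -/
def qmap : ℚ →+* Ra n R :=
  (toRa n R).comp ((MvPolynomial.C).comp (algebraMap ℚ R))

/-- Evaluation `x = α_i : H → R_α`. -/
def evH (i : Fin n) : Hring n R →+* Ra n R :=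
  Ideal.Quotient.lift _
    (MvPolynomial.eval₂Hom ((toRa n R).comp MvPolynomial.C)
      (fun v => match v with
        | none => aR n R i
        | some k => aR n R k)) (by
    intro f hf
    rw [Ideal.mem_span_singleton] at hf
    obtain ⟨g, rfl⟩ := hf
    rw [map_mul]
    have h0 : (MvPolynomial.eval₂Hom ((toRa n R).comp MvPolynomial.C)
        (fun v : Option (Fin n) => match v with
          | none => aR n R i
          | some k => aR n R k))
        (∏ j : Fin n,
          (MvPolynomial.X (none : Option (Fin n)) - MvPolynomial.X (some j))) = 0 := by
      rw [map_prod]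
      refine Finset.prod_eq_zero (Finset.mem_univ i) ?_
      simp
    rw [h0, zero_mul])

/-- Coefficientwise application of a ring homomorphism to a Laurent series. -/
def mapLS {A B : Type*} [CommRing A] [CommRing B] (f : A →+* B)
    (x : LaurentSeries A) : LaurentSeries B where
  coeff := fun g => f (x.coeff g)
  isPWO_support' := x.isPWO_support'.mono (by
    intro g hg
    simp only [Function.mem_support] at hg ⊢
    exact fun h0 => hg (by rw [h0, map_zero]))

/-- Evaluation at `x = α_i` of an element of `H⟦ℏ⟧[[Q]]` (given by its `Q`-coefficients). -/
def ZE (Z : ℕ → LaurentSeries (Hring n R)) (i : Fin n) : ℕ → LaurentSeries (Ra n R) :=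
  fun d => mapLS (evH n R i) (Z d)

/-- The Laurent-series expansion (at `ℏ⁻¹ = 0`) of a polynomial in `ℏ`; the variable of
`LaurentSeries` is `X = ℏ⁻¹`. -/
def hEv : Polynomial (Ra n R) →+* LaurentSeries (Ra n R) :=
  Polynomial.eval₂RingHom HahnSeries.C (HahnSeries.single (-1 : ℤ) (1 : Ra n R))

/-- `f` is the Laurent expansion at `ℏ⁻¹ = 0` of the rational function `p/q` of `ℏ`. -/
def IsExp (f : LaurentSeries (Ra n R)) (p q : Polynomial (Ra n R)) : Prop :=
  hEv n R q * f = hEv n R p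

/-- `f` lies in (the image of) `R_α(ℏ)`. -/
def MemRat (f : LaurentSeries (Ra n R)) : Prop :=
  ∃ p q : Polynomial (Ra n R), q ≠ 0 ∧ IsExp n R f p q

/-- `f ∈ R_α(ℏ)` is regular at `ℏ = c`. -/
def RegAt (f : LaurentSeries (Ra n R)) (c : Ra n R) : Prop :=
  ∃ p q : Polynomial (Ra n R), IsUnit (Polynomial.eval c q) ∧ IsExp n R f p q

open Classical in
/-- The value at `ℏ = c` of (the rational function represented by) `f`. -/
def evalAt (f : LaurentSeries (Ra n R)) (c : Ra n R) : Ra n R :=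
  if h : RegAt n R f c then
    Polynomial.eval c h.choose * Ring.inverse (Polynomial.eval c h.choose_spec.choose)
  else 0

/-- `f` is a Laurent polynomial in `ℏ`, i.e. lies in `R_α[ℏ, ℏ⁻¹]`. -/
def IsLaurentPoly (f : LaurentSeries (Ra n R)) : Prop :=
  (Function.support f.coeff).Finite

/-- The expansion in `⟦ℏ⟧` of `1/(ℏ - c)`. -/
def oneOverHbarSub (c : Ra n R) : LaurentSeries (Ra n R) :=
  (HahnSeries.ofPowerSeries ℤ (Ra n R))
    (PowerSeries.mk fun k => if k = 0 then 0 else c ^ (k - 1))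

/-- `C`-recursivity (Definition 4.1), expressed in terms of the evaluations
`W i = Z(x = α_i, ℏ, Q)`. -/
def CRec (Cc : ℕ → Fin n → Fin n → Ra n R) (W : Fin n → ℕ → LaurentSeries (Ra n R)) : Prop :=
  ∀ dstar : ℕ,
    (∀ d, 1 ≤ d → d ≤ dstar → ∀ i, MemRat n R (W i (dstar - d))) →
    (∀ d, 1 ≤ d → d < dstar → ∀ i j : Fin n, i ≠ j →
      RegAt n R (W i d) ((aR n R i - aR n R j) * Ring.inverse ((d : ℕ) : Ra n R))) →
    ∀ i : Fin n,
      IsLaurentPoly n R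
        (W i dstar - ∑ d ∈ Icc 1 dstar, ∑ j ∈ univ.erase i,
          HahnSeries.C (Cc d i j) *
            oneOverHbarSub n R ((aR n R j - aR n R i) * Ring.inverse ((d : ℕ) : Ra n R)) *
            HahnSeries.C (evalAt n R (W j (dstar - d))
              ((aR n R j - aR n R i) * Ring.inverse ((d : ℕ) : Ra n R))))

/-- Recursivity: `C`-recursivity for some collection `C` of elements of `R_α`. -/
def Recursive (W : Fin n → ℕ → LaurentSeries (Ra n R)) : Prop :=
  ∃ Cc : ℕ → Fin n → Fin n → Ra n R, CRec n R Cc W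

/-- Negation substitution `ℏ ↦ -ℏ` on Laurent series in `ℏ⁻¹`. -/
def negSubst (f : LaurentSeries (Ra n R)) : LaurentSeries (Ra n R) where
  coeff := fun e => ((Int.negOnePow e : ℤˣ) : ℤ) • f.coeff e
  isPWO_support' := f.isPWO_support'.mono (by
    intro e he
    simp only [Function.mem_support] at he ⊢
    exact fun h0 => he (by rw [h0]; simp))

/-- The coefficient of `z^A Q^b` in
`Φ_{Y,Z}(ℏ,z,Q) = Σ_i (e^{α_i z}/∏_{k≠i}(α_i-α_k)) Y(α_i,ℏ,Q e^{ℏz}) Z(α_i,-ℏ,Q)`,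
in terms of the evaluations `WY i = Y(x=α_i,·,·)`, `WZ i = Z(x=α_i,·,·)`. -/
def PhiCoef (WY WZ : Fin n → ℕ → LaurentSeries (Ra n R)) (A b : ℕ) : LaurentSeries (Ra n R) :=
  ∑ i : Fin n,
    HahnSeries.C (Ring.inverse (∏ k ∈ univ.erase i, (aR n R i - aR n R k))) *
      ∑ dd ∈ Finset.HasAntidiagonal.antidiagonal b, ∑ kk ∈ Finset.HasAntidiagonal.antidiagonal A,
        HahnSeries.C (qmap n R ((1 : ℚ) / kk.1.factorial / kk.2.factorial) *
            aR n R i ^ kk.1 * ((dd.1 : ℕ) : Ra n R) ^ kk.2) *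
          (HahnSeries.single (-1 : ℤ) (1 : Ra n R)) ^ kk.2 *
          WY i dd.1 * negSubst n R (WZ i dd.2)

/-- The mutual polynomiality condition: `Φ_{Y,Z} ∈ R_α[ℏ][[z,Q]]`. -/
def MPC (WY WZ : Fin n → ℕ → LaurentSeries (Ra n R)) : Prop :=
  ∀ A b : ℕ, ∃ p : Polynomial (Ra n R), PhiCoef n R WY WZ A b = hEv n R p

end Stmt1

namespace Stmt1

/-- The class of `x` in `H = R[α,x]/((x-α_1)⋯(x-α_n))`. -/
def xH (n : ℕ) (R : Type) [Field R] [Algebra ℚ R] : Hring n R :=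
  Ideal.Quotient.mk _ (MvPolynomial.X (none : Option (Fin n)))

/-- The transform `Z̄ = (x + ℏ Q d/dQ) Z`, coefficientwise in `Q`. -/
def Zbar (n : ℕ) (R : Type) [Field R] [Algebra ℚ R]
    (Z : ℕ → LaurentSeries (Hring n R)) : ℕ → LaurentSeries (Hring n R) :=
  fun d => HahnSeries.C (xH n R) * Z d +
    HahnSeries.C ((d : ℕ) : Hring n R) *
      ((HahnSeries.single (-1 : ℤ) (1 : Hring n R) : LaurentSeries (Hring n R)) * Z d)

set_option maxHeartbeats 1000000
set_option synthInstance.maxHeartbeats 400000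

section Helpers

variable {A : Type*} [CommRing A]

lemma Cmul_coeff (c : A) (x : LaurentSeries A) (e : ℤ) :
    (HahnSeries.C c * x).coeff e = c * x.coeff e := by
  rw [HahnSeries.C_apply, HahnSeries.coeff_single_zero_mul]

lemma umul_coeff (x : LaurentSeries A) (e : ℤ) :
    ((HahnSeries.single (-1 : ℤ) (1 : A) : LaurentSeries A) * x).coeff e = x.coeff (e + 1) := by
  have h := HahnSeries.coeff_single_mul_add (r := (1 : A)) (x := x) (a := e + 1) (b := (-1 : ℤ))
  simpa using h

lemma double_sum_transform {S : Type*} [CommRing S] {ι κ : Type*} (s : Finset ι) (t : Finset κ)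
    (G W : S) (tb tt k : ι → κ → S)
    (h : ∀ d ∈ s, ∀ j ∈ t, tb d j = G * tt d j - k d j) :
    G * W - ∑ d ∈ s, ∑ j ∈ t, tb d j
      = G * (W - ∑ d ∈ s, ∑ j ∈ t, tt d j) + ∑ d ∈ s, ∑ j ∈ t, k d j := by
  have h1 : ∑ d ∈ s, ∑ j ∈ t, tb d j
      = ∑ d ∈ s, ∑ j ∈ t, (G * tt d j - k d j) :=
    Finset.sum_congr rfl fun d hd => Finset.sum_congr rfl fun j hj => h d hd j hj
  rw [h1]
  simp only [Finset.sum_sub_distrib, ← Finset.mul_sum]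
  ring

lemma sum_linear {S : Type*} [CommRing S] {ι : Type*} (s : Finset ι) (c1 c2 : S)
    (f g h : ι → S) (hper : ∀ x ∈ s, f x = c1 * g x - c2 * h x) :
    ∑ x ∈ s, f x = c1 * ∑ x ∈ s, g x - c2 * ∑ x ∈ s, h x := by
  rw [Finset.sum_congr rfl hper, Finset.sum_sub_distrib, ← Finset.mul_sum, ← Finset.mul_sum]

lemma key_sum_abstract {S : Type*} [CommRing S] (φ : ℚ →+* S) (a δ u : S) (A : ℕ) :
    φ (((A + 1 : ℕ) : ℚ)) * ∑ kk ∈ Finset.HasAntidiagonal.antidiagonal (A + 1),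
        φ ((1 : ℚ) / kk.1.factorial / kk.2.factorial) * a ^ kk.1 * δ ^ kk.2 * u ^ kk.2
    = a * ∑ kk ∈ Finset.HasAntidiagonal.antidiagonal A,
          φ ((1 : ℚ) / kk.1.factorial / kk.2.factorial) * a ^ kk.1 * δ ^ kk.2 * u ^ kk.2
      + δ * (u * ∑ kk ∈ Finset.HasAntidiagonal.antidiagonal A,
          φ ((1 : ℚ) / kk.1.factorial / kk.2.factorial) * a ^ kk.1 * δ ^ kk.2 * u ^ kk.2) := by
  rw [Finset.mul_sum]
  have hsplit : ∀ kk ∈ Finset.HasAntidiagonal.antidiagonal (A + 1),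
      φ (((A + 1 : ℕ) : ℚ)) * (φ ((1 : ℚ) / kk.1.factorial / kk.2.factorial) *
          a ^ kk.1 * δ ^ kk.2 * u ^ kk.2)
      = φ ((kk.1 : ℚ) * ((1 : ℚ) / kk.1.factorial / kk.2.factorial)) *
            a ^ kk.1 * δ ^ kk.2 * u ^ kk.2
        + φ ((kk.2 : ℚ) * ((1 : ℚ) / kk.1.factorial / kk.2.factorial)) *
            a ^ kk.1 * δ ^ kk.2 * u ^ kk.2 := by
    intro kk hkk
    rw [Finset.HasAntidiagonal.mem_antidiagonal] at hkk
    have hcast : ((A + 1 : ℕ) : ℚ) = (kk.1 : ℚ) + (kk.2 : ℚ) := by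
      rw [← hkk]; push_cast; ring
    rw [hcast, map_mul, map_mul, map_add]
    ring
  rw [Finset.sum_congr rfl hsplit, Finset.sum_add_distrib]
  congr 1
  · rw [Finset.Nat.sum_antidiagonal_succ]
    have h0 : φ (((0 : ℕ) : ℚ) * ((1 : ℚ) / (0 : ℕ).factorial / (A + 1).factorial)) *
        a ^ 0 * δ ^ (A + 1) * u ^ (A + 1) = 0 := by
      simp
    rw [h0, zero_add, Finset.mul_sum]
    refine Finset.sum_congr rfl fun kk _ => ?_
    have hfac : ((kk.1 + 1 : ℕ) : ℚ) * ((1 : ℚ) / (kk.1 + 1).factorial / kk.2.factorial)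
        = (1 : ℚ) / kk.1.factorial / kk.2.factorial := by
      have h1 : ((kk.1.factorial : ℚ)) ≠ 0 := Nat.cast_ne_zero.mpr (Nat.factorial_ne_zero _)
      have h2 : ((kk.2.factorial : ℚ)) ≠ 0 := Nat.cast_ne_zero.mpr (Nat.factorial_ne_zero _)
      rw [Nat.factorial_succ]
      push_cast
      field_simp
    rw [hfac]
    ring
  · rw [Finset.Nat.sum_antidiagonal_succ']
    have h0 : φ (((0 : ℕ) : ℚ) * ((1 : ℚ) / (A + 1).factorial / (0 : ℕ).factorial)) *
        a ^ (A + 1) * δ ^ 0 * u ^ 0 = 0 := by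
      simp
    rw [h0, zero_add, Finset.mul_sum, Finset.mul_sum]
    refine Finset.sum_congr rfl fun kk _ => ?_
    have hfac : ((kk.2 + 1 : ℕ) : ℚ) * ((1 : ℚ) / kk.1.factorial / (kk.2 + 1).factorial)
        = (1 : ℚ) / kk.1.factorial / kk.2.factorial := by
      have h1 : ((kk.1.factorial : ℚ)) ≠ 0 := Nat.cast_ne_zero.mpr (Nat.factorial_ne_zero _)
      have h2 : ((kk.2.factorial : ℚ)) ≠ 0 := Nat.cast_ne_zero.mpr (Nat.factorial_ne_zero _)
      rw [Nat.factorial_succ]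
      push_cast
      field_simp
    rw [hfac]
    ring

lemma per_dd_abstract {S : Type*} [CommRing S] (φ : ℚ →+* S) (a δ1 δ2 u M : S) (A : ℕ) :
    ∑ kk ∈ Finset.HasAntidiagonal.antidiagonal A,
        (φ ((1 : ℚ) / kk.1.factorial / kk.2.factorial) * a ^ kk.1 * δ1 ^ kk.2 * u ^ kk.2) *
          ((a - δ2 * u) * M)
    = φ (((A + 1 : ℕ) : ℚ)) * ((∑ kk ∈ Finset.HasAntidiagonal.antidiagonal (A + 1),
          φ ((1 : ℚ) / kk.1.factorial / kk.2.factorial) * a ^ kk.1 * δ1 ^ kk.2 * u ^ kk.2) * M)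
      - (δ1 + δ2) * u * ((∑ kk ∈ Finset.HasAntidiagonal.antidiagonal A,
          φ ((1 : ℚ) / kk.1.factorial / kk.2.factorial) * a ^ kk.1 * δ1 ^ kk.2 * u ^ kk.2) * M) := by
  have hk := key_sum_abstract φ a δ1 u A
  rw [← Finset.sum_mul]
  linear_combination (-M) * hk

end Helpers

section Main

variable (n : ℕ) (R : Type) [Field R] [Algebra ℚ R]

lemma evH_xH (i : Fin n) : evH n R i (xH n R) = aR n R i := by
  rw [xH, evH, Ideal.Quotient.lift_mk]
  simp

lemma mapLS_coeff {B C : Type*} [CommRing B] [CommRing C] (f : B →+* C)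
    (x : LaurentSeries B) (e : ℤ) : (mapLS f x).coeff e = f (x.coeff e) := rfl

lemma ZE_Zbar (Z : ℕ → LaurentSeries (Hring n R)) (i : Fin n) (d : ℕ) :
    ZE n R (Zbar n R Z) i d =
      (HahnSeries.C (aR n R i) + HahnSeries.C ((d : ℕ) : Ra n R) *
        (HahnSeries.single (-1 : ℤ) (1 : Ra n R) : LaurentSeries (Ra n R))) * ZE n R Z i d := by
  ext e
  rw [ZE, mapLS_coeff, Zbar, add_mul, mul_assoc, HahnSeries.coeff_add, HahnSeries.coeff_add,
    Cmul_coeff, Cmul_coeff, Cmul_coeff, Cmul_coeff, umul_coeff, umul_coeff,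
    map_add, map_mul, map_mul, evH_xH, map_natCast]
  rfl

lemma negSubst_coeff (f : LaurentSeries (Ra n R)) (e : ℤ) :
    (negSubst n R f).coeff e = ((Int.negOnePow e : ℤˣ) : ℤ) • f.coeff e := rfl

lemma negSubst_ZE_Zbar (Z : ℕ → LaurentSeries (Hring n R)) (i : Fin n) (d : ℕ) :
    negSubst n R (ZE n R (Zbar n R Z) i d) =
      (HahnSeries.C (aR n R i) - HahnSeries.C ((d : ℕ) : Ra n R) *
        (HahnSeries.single (-1 : ℤ) (1 : Ra n R) : LaurentSeries (Ra n R))) *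
        negSubst n R (ZE n R Z i d) := by
  have hsm := sub_mul (HahnSeries.C (aR n R i))
    (HahnSeries.C ((d : ℕ) : Ra n R) *
      (HahnSeries.single (-1 : ℤ) (1 : Ra n R) : LaurentSeries (Ra n R)))
    (negSubst n R (ZE n R Z i d))
  ext e
  rw [negSubst_coeff, ZE_Zbar, hsm]
  simp only [add_mul, mul_assoc, HahnSeries.coeff_sub, HahnSeries.coeff_add, Cmul_coeff,
    umul_coeff, negSubst_coeff, Int.negOnePow_succ, Units.val_neg, neg_smul, smul_add,
    mul_smul_comm, mul_neg, sub_neg_eq_add]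
  have hz : ∀ (m : ℤ) (x : Ra n R), m • x = (m : Ra n R) * x := fun m x => zsmul_eq_mul x m
  simp only [hz]
  ring

lemma hEv_C (a : Ra n R) : hEv n R (Polynomial.C a) = HahnSeries.C a := by
  rw [hEv, Polynomial.coe_eval₂RingHom, Polynomial.eval₂_C]

lemma hEv_X : hEv n R Polynomial.X =
    (HahnSeries.single (-1 : ℤ) (1 : Ra n R) : LaurentSeries (Ra n R)) := by
  rw [hEv, Polynomial.coe_eval₂RingHom, Polynomial.eval₂_X]

lemma hEv_coeff (p : Polynomial (Ra n R)) (k : ℕ) :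
    (hEv n R p).coeff (-(k : ℤ)) = p.coeff k := by
  have h1 : hEv n R p = ∑ e ∈ p.support, HahnSeries.single (-(e : ℤ)) (p.coeff e) := by
    rw [hEv, Polynomial.coe_eval₂RingHom, Polynomial.eval₂_eq_sum, Polynomial.sum]
    refine Finset.sum_congr rfl fun e _ => ?_
    rw [HahnSeries.single_pow, one_pow, HahnSeries.C_apply, HahnSeries.single_mul_single,
      zero_add, mul_one]
    congr 1
    simp
  rw [h1]
  rw [show (∑ e ∈ p.support, HahnSeries.single (-(e : ℤ)) (p.coeff e)).coeff (-(k : ℤ))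
      = (HahnSeries.coeff.addMonoidHom (-(k : ℤ)))
        (∑ e ∈ p.support, HahnSeries.single (-(e : ℤ)) (p.coeff e)) from rfl,
    map_sum]
  have h2 : ∀ e ∈ p.support,
      (HahnSeries.coeff.addMonoidHom (-(k : ℤ)))
        (HahnSeries.single (-(e : ℤ)) (p.coeff e)) = if e = k then p.coeff e else 0 := by
    intro e _
    show (HahnSeries.single (-(e : ℤ)) (p.coeff e)).coeff (-(k : ℤ)) = _
    rw [HahnSeries.coeff_single]
    by_cases hek : e = k
    · simp [hek]
    · rw [if_neg (fun h => hek (by exact_mod_cast (neg_inj.mp h).symm)), if_neg hek]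
  rw [Finset.sum_congr rfl h2, Finset.sum_ite_eq' p.support k]
  split
  · rfl
  · exact (Polynomial.notMem_support_iff.mp (by assumption)).symm

lemma hEv_injective : Function.Injective (hEv n R) := by
  intro p q h
  ext k
  rw [← hEv_coeff n R p k, ← hEv_coeff n R q k, h]

lemma qSet_le : qSet n R ≤ nonZeroDivisors (MvPolynomial (Fin n) R) := by
  rintro x ⟨p, hp, rfl⟩
  have hp0 : p ≠ 0 := nonZeroDivisors.ne_zero hp
  have hmap : (MvPolynomial.map (algebraMap ℚ R)) p ≠ 0 := fun h =>
    hp0 (MvPolynomial.map_injective _ (algebraMap ℚ R).injective (by simpa using h))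
  exact mem_nonZeroDivisors_of_ne_zero hmap

instance : IsDomain (Ra n R) := IsLocalization.isDomain_localization (qSet_le n R)

lemma isUnit_image {p : MvPolynomial (Fin n) ℚ} (hp : p ≠ 0) :
    IsUnit (toRa n R (MvPolynomial.map (algebraMap ℚ R) p)) := by
  have hmem : (MvPolynomial.map (algebraMap ℚ R)) p ∈ qSet n R :=
    ⟨p, mem_nonZeroDivisors_of_ne_zero hp, rfl⟩
  exact IsLocalization.map_units (Ra n R) (⟨_, hmem⟩ : qSet n R)

lemma isUnit_aR (i : Fin n) : IsUnit (aR n R i) := by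
  have h := isUnit_image n R (p := MvPolynomial.X i) (MvPolynomial.X_ne_zero i)
  rwa [MvPolynomial.map_X] at h

lemma qmap_eq (q : ℚ) : qmap n R q = toRa n R (MvPolynomial.map (algebraMap ℚ R)
    (MvPolynomial.C q)) := by
  rw [MvPolynomial.map_C]
  rfl

lemma isUnit_qmap {q : ℚ} (hq : q ≠ 0) : IsUnit (qmap n R q) := by
  rw [qmap_eq]
  exact isUnit_image n R (fun h => hq (by simpa using congrArg (MvPolynomial.coeff 0) h))

instance : CharZero (Ra n R) := by
  have hinj : Function.Injective (qmap n R) := (qmap n R).injective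
  refine ⟨fun a b h => ?_⟩
  have : qmap n R a = qmap n R b := by rw [map_natCast, map_natCast]; exact_mod_cast h
  exact_mod_cast hinj this

lemma isUnit_natCast {d : ℕ} (hd : d ≠ 0) : IsUnit ((d : ℕ) : Ra n R) := by
  have h := isUnit_qmap n R (q := (d : ℚ)) (by exact_mod_cast hd)
  rwa [map_natCast] at h

lemma isUnit_comb (i j : Fin n) (hij : i ≠ j) (c1 c2 : ℕ) (hc : c1 ≠ 0) :
    IsUnit ((c1 : Ra n R) * aR n R i - (c2 : Ra n R) * aR n R j) := by
  have key : (c1 : Ra n R) * aR n R i - (c2 : Ra n R) * aR n R j =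
      toRa n R (MvPolynomial.map (algebraMap ℚ R)
        ((c1 : MvPolynomial (Fin n) ℚ) * MvPolynomial.X i -
          (c2 : MvPolynomial (Fin n) ℚ) * MvPolynomial.X j)) := by
    rw [map_sub, map_sub, map_mul, map_mul, map_mul, map_mul, MvPolynomial.map_X,
      MvPolynomial.map_X, map_natCast, map_natCast, map_natCast, map_natCast]
    rfl
  rw [key]
  refine isUnit_image n R (fun h => ?_)
  have h2 := congrArg (MvPolynomial.eval (fun k => if k = i then (1 : ℚ) else 0)) h
  simp [hij.symm] at h2
  exact hc h2
lemma evalAt_eq {f : LaurentSeries (Ra n R)} {p q : Polynomial (Ra n R)} {c : Ra n R}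
    (hq : IsUnit (Polynomial.eval c q)) (h : IsExp n R f p q) :
    evalAt n R f c = Polynomial.eval c p * Ring.inverse (Polynomial.eval c q) := by
  have hreg : RegAt n R f c := ⟨p, q, hq, h⟩
  rw [evalAt, dif_pos hreg]
  set p0 := hreg.choose with hp0
  set q0 := hreg.choose_spec.choose with hq0
  have hspec := hreg.choose_spec.choose_spec
  have hu0 : IsUnit (Polynomial.eval c q0) := hspec.1
  have hexp0 : IsExp n R f p0 q0 := hspec.2
  have hcross : q * p0 = q0 * p := by
    apply hEv_injective n R
    rw [map_mul, map_mul, ← hexp0, ← h]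
    ring
  have hcross' : Polynomial.eval c q * Polynomial.eval c p0 =
      Polynomial.eval c q0 * Polynomial.eval c p := by
    rw [← Polynomial.eval_mul, ← Polynomial.eval_mul, hcross]
  have hb := Ring.inverse_mul_cancel _ hu0
  have ha := Ring.inverse_mul_cancel _ hq
  refine (hq.mul hu0).mul_right_cancel ?_
  calc Polynomial.eval c p0 * Ring.inverse (Polynomial.eval c q0) *
        (Polynomial.eval c q * Polynomial.eval c q0)
      = (Polynomial.eval c q * Polynomial.eval c p0) *
        (Ring.inverse (Polynomial.eval c q0) * Polynomial.eval c q0) := by ring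
    _ = (Polynomial.eval c q0 * Polynomial.eval c p) * 1 := by rw [hb, hcross']
    _ = (Polynomial.eval c p * Ring.inverse (Polynomial.eval c q)) *
        (Polynomial.eval c q * Polynomial.eval c q0) := by
        rw [mul_one]
        calc Polynomial.eval c q0 * Polynomial.eval c p
            = Polynomial.eval c p * (Ring.inverse (Polynomial.eval c q) * Polynomial.eval c q) *
              Polynomial.eval c q0 := by rw [ha]; ring
          _ = _ := by ring

lemma regAt_of_mul {f : Polynomial (Ra n R)} {W : LaurentSeries (Ra n R)} {c : Ra n R}
    (hu : IsUnit (Polynomial.eval c f)) (h : RegAt n R (hEv n R f * W) c) :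
    RegAt n R W c := by
  obtain ⟨p, q, hq, hexp⟩ := h
  refine ⟨p, q * f, by rw [Polynomial.eval_mul]; exact hq.mul hu, ?_⟩
  rw [IsExp, map_mul]
  rw [IsExp] at hexp
  rw [← hexp]
  ring

lemma regAt_mul {f : Polynomial (Ra n R)} {W : LaurentSeries (Ra n R)} {c : Ra n R}
    (h : RegAt n R W c) : RegAt n R (hEv n R f * W) c := by
  obtain ⟨p, q, hq, hexp⟩ := h
  refine ⟨f * p, q, hq, ?_⟩
  rw [IsExp, map_mul]
  rw [IsExp] at hexp
  rw [← hexp]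
  ring

lemma evalAt_hEv_mul {f : Polynomial (Ra n R)} {W : LaurentSeries (Ra n R)} {c : Ra n R}
    (hu : IsUnit (Polynomial.eval c f)) :
    evalAt n R (hEv n R f * W) c = Polynomial.eval c f * evalAt n R W c := by
  by_cases h : RegAt n R W c
  · obtain ⟨p, q, hq, hexp⟩ := h
    have hexp2 : IsExp n R (hEv n R f * W) (f * p) q := by
      rw [IsExp, map_mul]
      rw [IsExp] at hexp
      rw [← hexp]
      ring
    rw [evalAt_eq n R hq hexp, evalAt_eq n R hq hexp2, Polynomial.eval_mul]
    ring
  · rw [evalAt, dif_neg (fun hh => h (regAt_of_mul n R hu hh)), evalAt, dif_neg h, mul_zero]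

lemma memRat_of_mul {f : Polynomial (Ra n R)} {W : LaurentSeries (Ra n R)}
    (hf : f ≠ 0) (h : MemRat n R (hEv n R f * W)) : MemRat n R W := by
  obtain ⟨p, q, hq0, hexp⟩ := h
  refine ⟨p, q * f, mul_ne_zero hq0 hf, ?_⟩
  rw [IsExp, map_mul]
  rw [IsExp] at hexp
  rw [← hexp]
  ring
-- Laurent polynomial (finite support) lemmas

lemma ILP_def {f : LaurentSeries (Ra n R)} : IsLaurentPoly n R f ↔ f.support.Finite :=
  Iff.rfl

lemma ILP_add {f g : LaurentSeries (Ra n R)} (hf : IsLaurentPoly n R f)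
    (hg : IsLaurentPoly n R g) : IsLaurentPoly n R (f + g) := by
  rw [ILP_def] at *
  refine (hf.union hg).subset ?_
  intro e he
  simp only [HahnSeries.mem_support, HahnSeries.coeff_add] at he
  by_contra hcon
  simp only [Set.mem_union, HahnSeries.mem_support, not_or, not_not] at hcon
  rw [hcon.1, hcon.2, add_zero] at he
  exact he rfl

lemma ILP_neg {f : LaurentSeries (Ra n R)} (hf : IsLaurentPoly n R f) :
    IsLaurentPoly n R (-f) := by
  rw [ILP_def] at *
  refine hf.subset ?_
  intro e he
  simp only [HahnSeries.mem_support, HahnSeries.coeff_neg, neg_ne_zero] at he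
  exact he

lemma ILP_sub {f g : LaurentSeries (Ra n R)} (hf : IsLaurentPoly n R f)
    (hg : IsLaurentPoly n R g) : IsLaurentPoly n R (f - g) := by
  rw [ILP_def] at *
  refine (hf.union hg).subset ?_
  intro e he
  simp only [HahnSeries.mem_support, HahnSeries.coeff_sub] at he
  by_contra hcon
  simp only [Set.mem_union, HahnSeries.mem_support, not_or, not_not] at hcon
  rw [hcon.1, hcon.2, sub_zero] at he
  exact he rfl

lemma ILP_mul {f g : LaurentSeries (Ra n R)} (hf : IsLaurentPoly n R f)
    (hg : IsLaurentPoly n R g) : IsLaurentPoly n R (f * g) := by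
  rw [ILP_def] at *
  exact (hf.add hg).subset HahnSeries.support_mul_subset

lemma ILP_single (a : ℤ) (r : Ra n R) :
    IsLaurentPoly n R (HahnSeries.single a r) := by
  rw [ILP_def]
  exact (Set.finite_singleton a).subset HahnSeries.support_single_subset

lemma ILP_C (r : Ra n R) : IsLaurentPoly n R (HahnSeries.C r) := by
  rw [HahnSeries.C_apply]
  exact ILP_single n R 0 r

lemma ILP_sum {ι : Type*} (s : Finset ι) (f : ι → LaurentSeries (Ra n R))
    (h : ∀ i ∈ s, IsLaurentPoly n R (f i)) : IsLaurentPoly n R (∑ i ∈ s, f i) := by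
  classical
  induction s using Finset.induction_on with
  | empty => simpa [ILP_def] using Set.finite_empty
  | insert a s hnotmem ih =>
    rw [Finset.sum_insert hnotmem]
    exact ILP_add n R (h a (Finset.mem_insert_self a s))
      (ih fun i hi => h i (Finset.mem_insert_of_mem hi))

-- oneOverHbarSub coefficients

lemma O_coeff (c : Ra n R) (e : ℤ) :
    (oneOverHbarSub n R c).coeff e = if 1 ≤ e then c ^ (e - 1).toNat else 0 := by
  rcases le_or_gt 0 e with he | he
  · lift e to ℕ using he
    rw [oneOverHbarSub, HahnSeries.ofPowerSeries_apply_coeff, PowerSeries.coeff_mk]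
    rcases Nat.eq_zero_or_pos e with rfl | hpos
    · norm_num
    · rw [if_neg (by omega), if_pos (by exact_mod_cast hpos)]
      congr 1
      omega
  · rw [oneOverHbarSub, HahnSeries.ofPowerSeries_apply, HahnSeries.embDomain_of_notMem_range,
      if_neg (by omega)]
    rintro ⟨m, hm⟩
    change ((m : ℕ) : ℤ) = e at hm
    omega

lemma u_mul_O (c : Ra n R) :
    (HahnSeries.single (-1 : ℤ) (1 : Ra n R) : LaurentSeries (Ra n R)) *
        oneOverHbarSub n R c =
      1 + HahnSeries.C c * oneOverHbarSub n R c := by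
  ext e
  rw [umul_coeff, HahnSeries.coeff_add, Cmul_coeff, O_coeff, O_coeff, HahnSeries.coeff_one]
  rcases lt_trichotomy e 0 with he | rfl | he
  · rw [if_neg (show ¬(1:ℤ) ≤ e + 1 by omega), if_neg (show ¬(1:ℤ) ≤ e by omega),
      if_neg (show ¬ e = 0 by omega), mul_zero, add_zero]
  · norm_num
  · rw [if_pos (show (1:ℤ) ≤ e + 1 by omega), if_pos (show (1:ℤ) ≤ e by omega),
      if_neg (show ¬ e = 0 by omega), zero_add,
      show (e + 1 - 1).toNat = (e - 1).toNat + 1 by omega, pow_succ]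
    ring

lemma G_mul_O (a dstar z : Ra n R) :
    (HahnSeries.C a + HahnSeries.C dstar *
        (HahnSeries.single (-1 : ℤ) (1 : Ra n R) : LaurentSeries (Ra n R))) *
        oneOverHbarSub n R z
      = HahnSeries.C (a + dstar * z) * oneOverHbarSub n R z + HahnSeries.C dstar := by
  have h1 := u_mul_O n R z
  have h2 := add_mul (HahnSeries.C a)
    (HahnSeries.C dstar * (HahnSeries.single (-1 : ℤ) (1 : Ra n R) : LaurentSeries (Ra n R)))
    (oneOverHbarSub n R z)
  rw [h2, mul_assoc, h1, map_add, map_mul]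
  ring
/-- The polynomial `α_i + m ℏ`. -/
def fd (i : Fin n) (m : ℕ) : Polynomial (Ra n R) :=
  Polynomial.C (aR n R i) + Polynomial.C ((m : ℕ) : Ra n R) * Polynomial.X

lemma hEv_fd (i : Fin n) (m : ℕ) :
    hEv n R (fd n R i m) = HahnSeries.C (aR n R i) + HahnSeries.C ((m : ℕ) : Ra n R) *
      (HahnSeries.single (-1 : ℤ) (1 : Ra n R) : LaurentSeries (Ra n R)) := by
  rw [fd, map_add, map_mul, hEv_C, hEv_C, hEv_X]

lemma fd_ne_zero (i : Fin n) (m : ℕ) : fd n R i m ≠ 0 := by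
  intro h
  have h0 := congrArg (fun p => Polynomial.coeff p 0) h
  simp only [fd, Polynomial.coeff_add, Polynomial.coeff_C_mul, Polynomial.coeff_X_zero,
    Polynomial.coeff_C, if_pos rfl, mul_zero, add_zero, Polynomial.coeff_zero] at h0
  exact (isUnit_aR n R i).ne_zero h0

lemma eval_fd (i : Fin n) (m : ℕ) (c : Ra n R) :
    Polynomial.eval c (fd n R i m) = aR n R i + ((m : ℕ) : Ra n R) * c := by
  rw [fd, Polynomial.eval_add, Polynomial.eval_C, Polynomial.eval_mul, Polynomial.eval_C,
    Polynomial.eval_X]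

lemma isUnit_eval_fd_self (i j : Fin n) (hij : i ≠ j) (d : ℕ) (hd : d ≠ 0) :
    IsUnit (Polynomial.eval ((aR n R i - aR n R j) * Ring.inverse ((d : ℕ) : Ra n R))
      (fd n R i d)) := by
  have hdu := isUnit_natCast n R (d := d) hd
  have hcan := Ring.mul_inverse_cancel _ hdu
  rw [eval_fd]
  have hval : aR n R i + ((d : ℕ) : Ra n R) *
      ((aR n R i - aR n R j) * Ring.inverse ((d : ℕ) : Ra n R))
      = ((2 : ℕ) : Ra n R) * aR n R i - ((1 : ℕ) : Ra n R) * aR n R j := by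
    rw [show ((d : ℕ) : Ra n R) * ((aR n R i - aR n R j) * Ring.inverse ((d : ℕ) : Ra n R))
        = (((d : ℕ) : Ra n R) * Ring.inverse ((d : ℕ) : Ra n R)) * (aR n R i - aR n R j) from by
      ring, hcan]
    push_cast
    ring
  rw [hval]
  exact isUnit_comb n R i j hij 2 1 (by norm_num)

lemma isUnit_eval_fd_cross (i j : Fin n) (hij : i ≠ j) (d m : ℕ) (hd : d ≠ 0) :
    IsUnit (Polynomial.eval ((aR n R j - aR n R i) * Ring.inverse ((d : ℕ) : Ra n R))
      (fd n R j m)) := by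
  have hdu := isUnit_natCast n R (d := d) hd
  have hcan := Ring.mul_inverse_cancel _ hdu
  rw [eval_fd]
  apply isUnit_of_mul_isUnit_right (x := ((d : ℕ) : Ra n R))
  have hval : ((d : ℕ) : Ra n R) * (aR n R j + ((m : ℕ) : Ra n R) *
      ((aR n R j - aR n R i) * Ring.inverse ((d : ℕ) : Ra n R)))
      = (((d + m : ℕ)) : Ra n R) * aR n R j - ((m : ℕ) : Ra n R) * aR n R i := by
    rw [mul_add, show ((d : ℕ) : Ra n R) * (((m : ℕ) : Ra n R) *
        ((aR n R j - aR n R i) * Ring.inverse ((d : ℕ) : Ra n R)))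
        = (((d : ℕ) : Ra n R) * Ring.inverse ((d : ℕ) : Ra n R)) *
          (((m : ℕ) : Ra n R) * (aR n R j - aR n R i)) from by ring, hcan]
    push_cast
    ring
  rw [hval]
  exact isUnit_comb n R j i hij.symm (d + m) m (by omega)

lemma part1 (Z : ℕ → LaurentSeries (Hring n R)) (hZ : Recursive n R (ZE n R Z)) :
    Recursive n R (ZE n R (Zbar n R Z)) := by
  obtain ⟨Cc, hC⟩ := hZ
  refine ⟨Cc, ?_⟩
  intro dstar hA hB i
  have hA' : ∀ d, 1 ≤ d → d ≤ dstar → ∀ k, MemRat n R (ZE n R Z k (dstar - d)) := by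
    intro d h1 h2 k
    have h := hA d h1 h2 k
    rw [ZE_Zbar, ← hEv_fd] at h
    exact memRat_of_mul n R (fd_ne_zero n R k _) h
  have hB' : ∀ d, 1 ≤ d → d < dstar → ∀ k j, k ≠ j →
      RegAt n R (ZE n R Z k d) ((aR n R k - aR n R j) * Ring.inverse ((d : ℕ) : Ra n R)) := by
    intro d h1 h2 k j hkj
    have h := hB d h1 h2 k j hkj
    rw [ZE_Zbar, ← hEv_fd] at h
    exact regAt_of_mul n R (isUnit_eval_fd_self n R k j hkj d (by omega)) h
  have hmain := hC dstar hA' hB' i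
  have hsum : ∀ d ∈ Icc 1 dstar, ∀ j ∈ univ.erase i,
      HahnSeries.C (Cc d i j) *
          oneOverHbarSub n R ((aR n R j - aR n R i) * Ring.inverse ((d : ℕ) : Ra n R)) *
          HahnSeries.C (evalAt n R (ZE n R (Zbar n R Z) j (dstar - d))
            ((aR n R j - aR n R i) * Ring.inverse ((d : ℕ) : Ra n R)))
        = (HahnSeries.C (aR n R i) + HahnSeries.C ((dstar : ℕ) : Ra n R) *
            (HahnSeries.single (-1 : ℤ) (1 : Ra n R) : LaurentSeries (Ra n R))) *
          (HahnSeries.C (Cc d i j) *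
            oneOverHbarSub n R ((aR n R j - aR n R i) * Ring.inverse ((d : ℕ) : Ra n R)) *
            HahnSeries.C (evalAt n R (ZE n R Z j (dstar - d))
              ((aR n R j - aR n R i) * Ring.inverse ((d : ℕ) : Ra n R))))
          - HahnSeries.C (Cc d i j * ((dstar : ℕ) : Ra n R) *
              evalAt n R (ZE n R Z j (dstar - d))
                ((aR n R j - aR n R i) * Ring.inverse ((d : ℕ) : Ra n R))) := by
    intro d hd j hj
    rw [Finset.mem_Icc] at hd
    rw [Finset.mem_erase] at hj
    have hij : i ≠ j := hj.1.symm
    have hd0 : d ≠ 0 := by omega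
    have hdu := isUnit_natCast n R (d := d) hd0
    have hcan := Ring.mul_inverse_cancel _ hdu
    have hcross := isUnit_eval_fd_cross n R i j hij d (dstar - d) hd0
    have heval : evalAt n R (ZE n R (Zbar n R Z) j (dstar - d))
        ((aR n R j - aR n R i) * Ring.inverse ((d : ℕ) : Ra n R))
        = Polynomial.eval ((aR n R j - aR n R i) * Ring.inverse ((d : ℕ) : Ra n R))
            (fd n R j (dstar - d)) *
          evalAt n R (ZE n R Z j (dstar - d))
            ((aR n R j - aR n R i) * Ring.inverse ((d : ℕ) : Ra n R)) := by
      rw [ZE_Zbar, ← hEv_fd]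
      exact evalAt_hEv_mul n R hcross
    have hvz : Polynomial.eval ((aR n R j - aR n R i) * Ring.inverse ((d : ℕ) : Ra n R))
        (fd n R j (dstar - d))
        = aR n R i + ((dstar : ℕ) : Ra n R) *
            ((aR n R j - aR n R i) * Ring.inverse ((d : ℕ) : Ra n R)) := by
      rw [eval_fd]
      have hdz : ((d : ℕ) : Ra n R) * ((aR n R j - aR n R i) * Ring.inverse ((d : ℕ) : Ra n R))
          = aR n R j - aR n R i := by
        rw [show ((d : ℕ) : Ra n R) * ((aR n R j - aR n R i) * Ring.inverse ((d : ℕ) : Ra n R))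
            = (((d : ℕ) : Ra n R) * Ring.inverse ((d : ℕ) : Ra n R)) * (aR n R j - aR n R i) from
          by ring, hcan, one_mul]
      have hcast : ((dstar : ℕ) : Ra n R) = ((d : ℕ) : Ra n R) + (((dstar - d) : ℕ) : Ra n R) := by
        rw [← Nat.cast_add]
        congr 1
        omega
      rw [hcast]
      linear_combination -hdz
    have hGO := G_mul_O n R (aR n R i) (((dstar : ℕ)) : Ra n R)
      ((aR n R j - aR n R i) * Ring.inverse ((d : ℕ) : Ra n R))
    rw [heval, hvz, map_mul, map_mul, map_mul]
    have h2 : (HahnSeries.C (aR n R i) + HahnSeries.C ((dstar : ℕ) : Ra n R) *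
          (HahnSeries.single (-1 : ℤ) (1 : Ra n R) : LaurentSeries (Ra n R))) *
        (HahnSeries.C (Cc d i j) *
          oneOverHbarSub n R ((aR n R j - aR n R i) * Ring.inverse ((d : ℕ) : Ra n R)) *
          HahnSeries.C (evalAt n R (ZE n R Z j (dstar - d))
            ((aR n R j - aR n R i) * Ring.inverse ((d : ℕ) : Ra n R))))
        = ((HahnSeries.C (aR n R i) + HahnSeries.C ((dstar : ℕ) : Ra n R) *
            (HahnSeries.single (-1 : ℤ) (1 : Ra n R) : LaurentSeries (Ra n R))) *
           oneOverHbarSub n R ((aR n R j - aR n R i) * Ring.inverse ((d : ℕ) : Ra n R))) *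
          (HahnSeries.C (Cc d i j) *
            HahnSeries.C (evalAt n R (ZE n R Z j (dstar - d))
              ((aR n R j - aR n R i) * Ring.inverse ((d : ℕ) : Ra n R)))) := by
      ring
    rw [h2, hGO]
    ring
  have key : ZE n R (Zbar n R Z) i dstar - ∑ d ∈ Icc 1 dstar, ∑ j ∈ univ.erase i,
        HahnSeries.C (Cc d i j) *
          oneOverHbarSub n R ((aR n R j - aR n R i) * Ring.inverse ((d : ℕ) : Ra n R)) *
          HahnSeries.C (evalAt n R (ZE n R (Zbar n R Z) j (dstar - d))
            ((aR n R j - aR n R i) * Ring.inverse ((d : ℕ) : Ra n R)))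
      = (HahnSeries.C (aR n R i) + HahnSeries.C ((dstar : ℕ) : Ra n R) *
            (HahnSeries.single (-1 : ℤ) (1 : Ra n R) : LaurentSeries (Ra n R))) *
          (ZE n R Z i dstar - ∑ d ∈ Icc 1 dstar, ∑ j ∈ univ.erase i,
            HahnSeries.C (Cc d i j) *
              oneOverHbarSub n R ((aR n R j - aR n R i) * Ring.inverse ((d : ℕ) : Ra n R)) *
              HahnSeries.C (evalAt n R (ZE n R Z j (dstar - d))
                ((aR n R j - aR n R i) * Ring.inverse ((d : ℕ) : Ra n R))))
        + ∑ d ∈ Icc 1 dstar, ∑ j ∈ univ.erase i,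
            HahnSeries.C (Cc d i j * ((dstar : ℕ) : Ra n R) *
              evalAt n R (ZE n R Z j (dstar - d))
                ((aR n R j - aR n R i) * Ring.inverse ((d : ℕ) : Ra n R))) := by
    rw [ZE_Zbar n R Z i dstar]
    exact double_sum_transform (S := LaurentSeries (Ra n R)) (Icc 1 dstar) (univ.erase i) _ _ _ _ _ hsum
  rw [key]
  refine ILP_add n R (ILP_mul n R ?_ hmain) ?_
  · exact ILP_add n R (ILP_C n R _) (ILP_mul n R (ILP_C n R _) (ILP_single n R _ _))
  · exact ILP_sum n R _ _ fun d _ => ILP_sum n R _ _ fun j _ => ILP_C n R _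
lemma C_push (x : ℚ) (v w : Ra n R) (k1 k2 : ℕ) :
    HahnSeries.C (qmap n R x * v ^ k1 * w ^ k2)
      = ((HahnSeries.C : Ra n R →+* LaurentSeries (Ra n R)).comp (qmap n R)) x *
          HahnSeries.C v ^ k1 * HahnSeries.C w ^ k2 := by
  rw [map_mul, map_mul, map_pow, map_pow]
  rfl

lemma per_dd_concrete (i : Fin n) (A d1 d2 : ℕ) (YY nW : LaurentSeries (Ra n R)) :
    (∑ kk ∈ Finset.HasAntidiagonal.antidiagonal A,
        HahnSeries.C (qmap n R ((1 : ℚ) / kk.1.factorial / kk.2.factorial) *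
            aR n R i ^ kk.1 * ((d1 : ℕ) : Ra n R) ^ kk.2) *
          (HahnSeries.single (-1 : ℤ) (1 : Ra n R) : LaurentSeries (Ra n R)) ^ kk.2 * YY *
          ((HahnSeries.C (aR n R i) - HahnSeries.C ((d2 : ℕ) : Ra n R) *
              (HahnSeries.single (-1 : ℤ) (1 : Ra n R) : LaurentSeries (Ra n R))) * nW))
    = HahnSeries.C (((A + 1 : ℕ)) : Ra n R) *
        ∑ kk ∈ Finset.HasAntidiagonal.antidiagonal (A + 1),
          HahnSeries.C (qmap n R ((1 : ℚ) / kk.1.factorial / kk.2.factorial) *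
              aR n R i ^ kk.1 * ((d1 : ℕ) : Ra n R) ^ kk.2) *
            (HahnSeries.single (-1 : ℤ) (1 : Ra n R) : LaurentSeries (Ra n R)) ^ kk.2 * YY * nW
      - HahnSeries.C (((d1 + d2 : ℕ)) : Ra n R) *
          (HahnSeries.single (-1 : ℤ) (1 : Ra n R) : LaurentSeries (Ra n R)) *
          ∑ kk ∈ Finset.HasAntidiagonal.antidiagonal A,
            HahnSeries.C (qmap n R ((1 : ℚ) / kk.1.factorial / kk.2.factorial) *
                aR n R i ^ kk.1 * ((d1 : ℕ) : Ra n R) ^ kk.2) *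
              (HahnSeries.single (-1 : ℤ) (1 : Ra n R) : LaurentSeries (Ra n R)) ^ kk.2 * YY *
              nW := by
  have habs := per_dd_abstract
    (φ := (HahnSeries.C : Ra n R →+* LaurentSeries (Ra n R)).comp (qmap n R))
    (HahnSeries.C (aR n R i)) (HahnSeries.C ((d1 : ℕ) : Ra n R))
    (HahnSeries.C ((d2 : ℕ) : Ra n R))
    (HahnSeries.single (-1 : ℤ) (1 : Ra n R) : LaurentSeries (Ra n R)) (YY * nW) A
  have e1 : (∑ kk ∈ Finset.HasAntidiagonal.antidiagonal A,
        HahnSeries.C (qmap n R ((1 : ℚ) / kk.1.factorial / kk.2.factorial) *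
            aR n R i ^ kk.1 * ((d1 : ℕ) : Ra n R) ^ kk.2) *
          (HahnSeries.single (-1 : ℤ) (1 : Ra n R) : LaurentSeries (Ra n R)) ^ kk.2 * YY *
          ((HahnSeries.C (aR n R i) - HahnSeries.C ((d2 : ℕ) : Ra n R) *
              (HahnSeries.single (-1 : ℤ) (1 : Ra n R) : LaurentSeries (Ra n R))) * nW))
      = ∑ kk ∈ Finset.HasAntidiagonal.antidiagonal A,
          (((HahnSeries.C : Ra n R →+* LaurentSeries (Ra n R)).comp (qmap n R))
              ((1 : ℚ) / kk.1.factorial / kk.2.factorial) *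
            HahnSeries.C (aR n R i) ^ kk.1 * HahnSeries.C ((d1 : ℕ) : Ra n R) ^ kk.2 *
            (HahnSeries.single (-1 : ℤ) (1 : Ra n R) : LaurentSeries (Ra n R)) ^ kk.2) *
          ((HahnSeries.C (aR n R i) - HahnSeries.C ((d2 : ℕ) : Ra n R) *
              (HahnSeries.single (-1 : ℤ) (1 : Ra n R) : LaurentSeries (Ra n R))) * (YY * nW)) :=
    Finset.sum_congr rfl fun kk _ => by rw [C_push]; ring
  have e2 : (∑ kk ∈ Finset.HasAntidiagonal.antidiagonal (A + 1),
        HahnSeries.C (qmap n R ((1 : ℚ) / kk.1.factorial / kk.2.factorial) *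
            aR n R i ^ kk.1 * ((d1 : ℕ) : Ra n R) ^ kk.2) *
          (HahnSeries.single (-1 : ℤ) (1 : Ra n R) : LaurentSeries (Ra n R)) ^ kk.2 * YY * nW)
      = (∑ kk ∈ Finset.HasAntidiagonal.antidiagonal (A + 1),
          ((HahnSeries.C : Ra n R →+* LaurentSeries (Ra n R)).comp (qmap n R))
              ((1 : ℚ) / kk.1.factorial / kk.2.factorial) *
            HahnSeries.C (aR n R i) ^ kk.1 * HahnSeries.C ((d1 : ℕ) : Ra n R) ^ kk.2 *
            (HahnSeries.single (-1 : ℤ) (1 : Ra n R) : LaurentSeries (Ra n R)) ^ kk.2) *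
          (YY * nW) := by
    rw [Finset.sum_mul]
    exact Finset.sum_congr rfl fun kk _ => by rw [C_push]; ring
  have e3 : (∑ kk ∈ Finset.HasAntidiagonal.antidiagonal A,
        HahnSeries.C (qmap n R ((1 : ℚ) / kk.1.factorial / kk.2.factorial) *
            aR n R i ^ kk.1 * ((d1 : ℕ) : Ra n R) ^ kk.2) *
          (HahnSeries.single (-1 : ℤ) (1 : Ra n R) : LaurentSeries (Ra n R)) ^ kk.2 * YY * nW)
      = (∑ kk ∈ Finset.HasAntidiagonal.antidiagonal A,
          ((HahnSeries.C : Ra n R →+* LaurentSeries (Ra n R)).comp (qmap n R))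
              ((1 : ℚ) / kk.1.factorial / kk.2.factorial) *
            HahnSeries.C (aR n R i) ^ kk.1 * HahnSeries.C ((d1 : ℕ) : Ra n R) ^ kk.2 *
            (HahnSeries.single (-1 : ℤ) (1 : Ra n R) : LaurentSeries (Ra n R)) ^ kk.2) *
          (YY * nW) := by
    rw [Finset.sum_mul]
    exact Finset.sum_congr rfl fun kk _ => by rw [C_push]; ring
  have hc1 : ((HahnSeries.C : Ra n R →+* LaurentSeries (Ra n R)).comp (qmap n R))
      (((A + 1 : ℕ)) : ℚ) = HahnSeries.C (((A + 1 : ℕ)) : Ra n R) := by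
    rw [RingHom.comp_apply, map_natCast (qmap n R)]
  have hc2 : (HahnSeries.C (((d1 + d2 : ℕ)) : Ra n R) : LaurentSeries (Ra n R))
      = HahnSeries.C ((d1 : ℕ) : Ra n R) + HahnSeries.C ((d2 : ℕ) : Ra n R) := by
    rw [Nat.cast_add]
    exact map_add (HahnSeries.C : Ra n R →+* LaurentSeries (Ra n R)) _ _
  rw [e1, habs, e2, e3, hc1, hc2]

lemma part2 (Y Z : ℕ → LaurentSeries (Hring n R))
    (hMPC : MPC n R (ZE n R Y) (ZE n R Z)) :
    MPC n R (ZE n R Y) (ZE n R (Zbar n R Z)) := by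
  intro A b
  obtain ⟨p1, hp1⟩ := hMPC (A + 1) b
  obtain ⟨p2, hp2⟩ := hMPC A b
  refine ⟨Polynomial.C (((A + 1 : ℕ)) : Ra n R) * p1 -
    Polynomial.C (((b : ℕ)) : Ra n R) * Polynomial.X * p2, ?_⟩
  have key : PhiCoef n R (ZE n R Y) (ZE n R (Zbar n R Z)) A b
      = HahnSeries.C (((A + 1 : ℕ)) : Ra n R) * PhiCoef n R (ZE n R Y) (ZE n R Z) (A + 1) b
        - HahnSeries.C (((b : ℕ)) : Ra n R) *
            (HahnSeries.single (-1 : ℤ) (1 : Ra n R) : LaurentSeries (Ra n R)) *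
            PhiCoef n R (ZE n R Y) (ZE n R Z) A b := by
    simp only [PhiCoef]
    refine sum_linear (S := LaurentSeries (Ra n R)) univ _ _ _ _ _ ?_
    intro i _
    have hinner : (∑ dd ∈ Finset.HasAntidiagonal.antidiagonal b, ∑ kk ∈ Finset.HasAntidiagonal.antidiagonal A,
          HahnSeries.C (qmap n R ((1 : ℚ) / kk.1.factorial / kk.2.factorial) *
              aR n R i ^ kk.1 * ((dd.1 : ℕ) : Ra n R) ^ kk.2) *
            (HahnSeries.single (-1 : ℤ) (1 : Ra n R) : LaurentSeries (Ra n R)) ^ kk.2 *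
            ZE n R Y i dd.1 * negSubst n R (ZE n R (Zbar n R Z) i dd.2))
        = HahnSeries.C (((A + 1 : ℕ)) : Ra n R) *
            (∑ dd ∈ Finset.HasAntidiagonal.antidiagonal b, ∑ kk ∈ Finset.HasAntidiagonal.antidiagonal (A + 1),
              HahnSeries.C (qmap n R ((1 : ℚ) / kk.1.factorial / kk.2.factorial) *
                  aR n R i ^ kk.1 * ((dd.1 : ℕ) : Ra n R) ^ kk.2) *
                (HahnSeries.single (-1 : ℤ) (1 : Ra n R) : LaurentSeries (Ra n R)) ^ kk.2 *
                ZE n R Y i dd.1 * negSubst n R (ZE n R Z i dd.2))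
          - HahnSeries.C (((b : ℕ)) : Ra n R) *
              (HahnSeries.single (-1 : ℤ) (1 : Ra n R) : LaurentSeries (Ra n R)) *
              (∑ dd ∈ Finset.HasAntidiagonal.antidiagonal b, ∑ kk ∈ Finset.HasAntidiagonal.antidiagonal A,
                HahnSeries.C (qmap n R ((1 : ℚ) / kk.1.factorial / kk.2.factorial) *
                    aR n R i ^ kk.1 * ((dd.1 : ℕ) : Ra n R) ^ kk.2) *
                  (HahnSeries.single (-1 : ℤ) (1 : Ra n R) : LaurentSeries (Ra n R)) ^ kk.2 *
                  ZE n R Y i dd.1 * negSubst n R (ZE n R Z i dd.2)) := by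
      refine sum_linear (S := LaurentSeries (Ra n R)) (Finset.HasAntidiagonal.antidiagonal b) _ _ _ _ _ ?_
      intro dd hdd
      have hb : dd.1 + dd.2 = b := Finset.HasAntidiagonal.mem_antidiagonal.mp hdd
      have hstep : (∑ kk ∈ Finset.HasAntidiagonal.antidiagonal A,
            HahnSeries.C (qmap n R ((1 : ℚ) / kk.1.factorial / kk.2.factorial) *
                aR n R i ^ kk.1 * ((dd.1 : ℕ) : Ra n R) ^ kk.2) *
              (HahnSeries.single (-1 : ℤ) (1 : Ra n R) : LaurentSeries (Ra n R)) ^ kk.2 *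
              ZE n R Y i dd.1 * negSubst n R (ZE n R (Zbar n R Z) i dd.2))
          = ∑ kk ∈ Finset.HasAntidiagonal.antidiagonal A,
              HahnSeries.C (qmap n R ((1 : ℚ) / kk.1.factorial / kk.2.factorial) *
                  aR n R i ^ kk.1 * ((dd.1 : ℕ) : Ra n R) ^ kk.2) *
                (HahnSeries.single (-1 : ℤ) (1 : Ra n R) : LaurentSeries (Ra n R)) ^ kk.2 *
                ZE n R Y i dd.1 *
                ((HahnSeries.C (aR n R i) - HahnSeries.C ((dd.2 : ℕ) : Ra n R) *
                    (HahnSeries.single (-1 : ℤ) (1 : Ra n R) : LaurentSeries (Ra n R))) *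
                  negSubst n R (ZE n R Z i dd.2)) :=
        Finset.sum_congr rfl fun kk _ => by rw [negSubst_ZE_Zbar]
      rw [hstep, per_dd_concrete n R i A dd.1 dd.2 (ZE n R Y i dd.1)
        (negSubst n R (ZE n R Z i dd.2)), hb]
    rw [hinner]
    ring
  have hr1 := map_sub (hEv n R) (Polynomial.C (((A + 1 : ℕ)) : Ra n R) * p1)
    (Polynomial.C (((b : ℕ)) : Ra n R) * Polynomial.X * p2)
  have hr2 := map_mul (hEv n R) (Polynomial.C (((A + 1 : ℕ)) : Ra n R)) p1
  have hr3 := map_mul (hEv n R) (Polynomial.C (((b : ℕ)) : Ra n R) * Polynomial.X) p2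
  have hr4 := map_mul (hEv n R) (Polynomial.C (((b : ℕ)) : Ra n R)) Polynomial.X
  rw [key, hp1, hp2, hr1, hr2, hr3, hr4, hEv_C, hEv_C, hEv_X]
end Main


/-- Lemma 4.4(i): if `Y(x=α_i,ℏ,Q) ∈ R_α(ℏ)[[Q]]` for all `i`, `Z` is
recursive, and `(Y,Z)` satisfies the MPC, then `Z̄ = (x + ℏ Q d/dQ) Z` is recursive and
`(Y, Z̄)` satisfies the MPC. -/
theorem stmt2 (n : ℕ) (hn : 2 ≤ n) (R : Type) [Field R] [Algebra ℚ R]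
    (Y Z : ℕ → LaurentSeries (Hring n R))
    (hY : ∀ i : Fin n, ∀ d, MemRat n R (ZE n R Y i d))
    (hZ : Recursive n R (ZE n R Z))
    (hMPC : MPC n R (ZE n R Y) (ZE n R Z)) :
    Recursive n R (ZE n R (Zbar n R Z)) ∧ MPC n R (ZE n R Y) (ZE n R (Zbar n R Z)) := by
  exact ⟨part1 n R Z hZ, part2 n R Y Z hMPC⟩

end Stmt1
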